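/- Let q ≥ 1 be an integer. Let V be the free ℤ-module with orthogonal basis H, E, E_1, …, E_{4q} and symmetric bilinear form Q with Q(H,H) = 1, Q(E,E) = −1, Q(E_i,E_i) = −1. Suppose Λ ∈ V satisfies: Q(Λ, H−E) = 2; Q(Λ, E_{2i} − E_{2i−1}) = 0 for all i = 1, …, 2q; Q(Λ, H − E − E_{2i−1} − E_{2i}) = 0 for all i = 1, …, 2q; and Q(Λ,Λ) = 0. Then Λ = (q+1)H − (q−1)E − (E_1 + ⋯ + E_{4q}). -/

import Mathlib

private lemma sum_eval {n : ℕ} (g : Fin n → ℤ) (s : Finset (Fin n))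
    (h : ∀ i ∈ Finset.univ, i ∉ s → g i = 0) :
    ∑ i, g i = ∑ i ∈ s, g i := (Finset.sum_subset s.subset_univ h).symm


set_option maxHeartbeats 1000000 in
/-- In the second homology lattice of `R(q+1)` (basis `H, E, E₁, …, E_{4q}` indexed
`0, 1, 2, …, 4q+1`, with form `Q(v,w) = v₀w₀ - Σ_{i≥1} vᵢwᵢ`), any class `Λ` meeting
`H - E` twice, orthogonal to the (-2)-sphere classes `E_{2i} - E_{2i-1}` and
`H - E - E_{2i-1} - E_{2i}` for `i = 1, …, 2q`, and of square zero must be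
`(q+1)H - (q-1)E - (E₁ + ⋯ + E_{4q})`. -/
theorem stmt_14 (q : ℕ) (hq : 1 ≤ q)
    (Q : (Fin (4 * q + 2) → ℤ) → (Fin (4 * q + 2) → ℤ) → ℤ)
    (hQ : ∀ v w, Q v w = v ⟨0, by omega⟩ * w ⟨0, by omega⟩
      - ∑ i : Fin (4 * q + 2), if 1 ≤ (i : ℕ) then v i * w i else 0)
    (Λ : Fin (4 * q + 2) → ℤ)
    (h1 : Q Λ (fun i => if (i : ℕ) = 0 then 1 else if (i : ℕ) = 1 then -1 else 0) = 2)
    (h2 : ∀ i, 1 ≤ i → i ≤ 2 * q →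
      Q Λ (fun j => if (j : ℕ) = 2 * i + 1 then 1
        else if (j : ℕ) = 2 * i then -1 else 0) = 0)
    (h3 : ∀ i, 1 ≤ i → i ≤ 2 * q →
      Q Λ (fun j => if (j : ℕ) = 0 then 1 else if (j : ℕ) = 1 then -1
        else if (j : ℕ) = 2 * i ∨ (j : ℕ) = 2 * i + 1 then -1 else 0) = 0)
    (h4 : Q Λ Λ = 0) :
    Λ = fun j : Fin (4 * q + 2) => if (j : ℕ) = 0 then (q : ℤ) + 1
      else if (j : ℕ) = 1 then -((q : ℤ) - 1) else -1 := by
  -- h1 : Λ 0 + Λ 1 = 2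
  rw [hQ] at h1
  rw [sum_eval _ {⟨1, by omega⟩} (by
    intro k _ hk
    simp only [Finset.mem_singleton, Fin.ext_iff] at hk
    split_ifs <;> first | ring1 | (exfalso; omega))] at h1
  simp only [Finset.sum_singleton] at h1
  norm_num at h1
  -- pairwise facts
  have hpair : ∀ i (hi1 : 1 ≤ i) (hi2 : i ≤ 2 * q),
      Λ ⟨2 * i, by omega⟩ = -1 ∧ Λ ⟨2 * i + 1, by omega⟩ = -1 := by
    intro i hi1 hi2
    have e2 := h2 i hi1 hi2
    have e3 := h3 i hi1 hi2
    rw [hQ] at e2 e3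
    rw [sum_eval _ {⟨2 * i, by omega⟩, ⟨2 * i + 1, by omega⟩} (by
      intro k _ hk
      simp only [Finset.mem_insert, Finset.mem_singleton, Fin.ext_iff] at hk
      push_neg at hk
      split_ifs <;> first | ring1 | (exfalso; omega))] at e2
    rw [sum_eval _ {⟨1, by omega⟩, ⟨2 * i, by omega⟩, ⟨2 * i + 1, by omega⟩} (by
      intro k _ hk
      simp only [Finset.mem_insert, Finset.mem_singleton, Fin.ext_iff] at hk
      push_neg at hk
      split_ifs <;> first | ring1 | (exfalso; omega))] at e3
    have ne23 : (⟨2 * i, by omega⟩ : Fin (4 * q + 2)) ≠ ⟨2 * i + 1, by omega⟩ :=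
      by simp only [ne_eq, Fin.mk.injEq]; omega
    have nm1 : (⟨1, by omega⟩ : Fin (4 * q + 2)) ∉
        ({⟨2 * i, by omega⟩, ⟨2 * i + 1, by omega⟩} : Finset (Fin (4 * q + 2))) := by
      simp only [Finset.mem_insert, Finset.mem_singleton, Fin.ext_iff, Fin.val_mk]
      omega
    rw [Finset.sum_pair ne23] at e2
    rw [Finset.sum_insert nm1] at e3
    simp only [Finset.sum_pair ne23] at e3
    have F1 : ¬((0:ℕ) = 2*i+1) := by omega
    have F2 : ¬((0:ℕ) = 2*i) := by omega
    have F3 : (1:ℕ) ≤ 2*i := by omega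
    have F4 : ¬((2*i:ℕ) = 2*i+1) := by omega
    have F5 : ¬((2*i:ℕ) = 0) := by omega
    have F6 : ¬((2*i:ℕ) = 1) := by omega
    have F7 : ¬((2*i+1:ℕ) = 0) := by omega
    have F8 : ¬((2*i+1:ℕ) = 1) := by omega
    have F9 : ¬((1:ℕ) = 2*i) := by omega
    have F10 : ¬((1:ℕ) = 2*i+1) := by omega
    simp only [Fin.val_mk] at e2 e3
    norm_num [F1, F2, F3, F4, F5, F6, F7, F8, F9, F10] at e2 e3
    constructor <;> linarith
  -- all coordinates from index 2 on are -1
  have key : ∀ j : Fin (4 * q + 2), 2 ≤ (j : ℕ) → Λ j = -1 := by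
    intro j hj
    have hlt := j.isLt
    rcases Nat.even_or_odd (j : ℕ) with ⟨m, hm⟩ | ⟨m, hm⟩
    · have hj2 : j = ⟨2 * m, by omega⟩ := Fin.ext (by simpa using by omega : (j : ℕ) = 2 * m)
      rw [hj2]
      exact (hpair m (by omega) (by omega)).1
    · have hj2 : j = ⟨2 * m + 1, by omega⟩ := Fin.ext (by simpa using by omega : (j : ℕ) = 2 * m + 1)
      rw [hj2]
      exact (hpair m (by omega) (by omega)).2
  -- compute Q Λ Λ
  rw [hQ] at h4
  have congr1 : ∀ k : Fin (4 * q + 2), (if 1 ≤ (k : ℕ) then Λ k * Λ k else 0)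
      = (fun n : ℕ => if n = 1 then Λ 1 * Λ 1 else if 1 ≤ n then (1:ℤ) else 0) (k : ℕ) := by
    intro k
    show (if 1 ≤ (k : ℕ) then Λ k * Λ k else 0)
      = if (k : ℕ) = 1 then Λ 1 * Λ 1 else if 1 ≤ (k : ℕ) then (1:ℤ) else 0
    by_cases hk1 : (k : ℕ) = 1
    · have hk : k = ⟨1, by omega⟩ := Fin.ext hk1
      rw [if_pos (show (1:ℕ) ≤ (k:ℕ) by omega), if_pos hk1, hk, Fin.mk_one]
    · by_cases hk0 : (k : ℕ) = 0
      · simp only [hk0, hk1]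
        norm_num
      · have h2k : 2 ≤ (k : ℕ) := by omega
        simp only [hk1, if_false]
        rw [if_pos (by omega : 1 ≤ (k:ℕ)), if_pos (by omega : 1 ≤ (k:ℕ)), key k h2k]
        ring
  rw [Finset.sum_congr rfl (fun k _ => congr1 k)] at h4
  rw [Fin.sum_univ_eq_sum_range (fun n => if n = 1 then Λ 1 * Λ 1 else if 1 ≤ n then (1:ℤ) else 0) (4 * q + 2)] at h4
  rw [Finset.range_eq_Ico, ← Finset.sum_Ico_consecutive _ (by omega : 0 ≤ 2) (by omega : 2 ≤ 4 * q + 2)] at h4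
  rw [show Finset.Ico 0 2 = Finset.range 2 from (Finset.range_eq_Ico 2).symm,
      Finset.sum_range_succ, Finset.sum_range_one] at h4
  have hB : ∑ n ∈ Finset.Ico 2 (4 * q + 2),
      (if n = 1 then Λ 1 * Λ 1 else if 1 ≤ n then (1:ℤ) else 0) = (4 * q : ℤ) := by
    rw [Finset.sum_congr rfl (fun n hn => show _ = (1:ℤ) from by
      rw [Finset.mem_Ico] at hn
      rw [if_neg (by omega), if_pos (by omega)])]
    rw [Finset.sum_const, Nat.card_Ico, Nat.add_sub_cancel]
    simp [nsmul_eq_mul]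
  rw [hB] at h4
  norm_num at h4
  -- pin down the two remaining coordinates
  have hL1 : Λ 1 = -((q:ℤ) - 1) := by
    have e : Λ 0 = 2 - Λ 1 := by linarith
    rw [e] at h4
    nlinarith [h4]
  have hL0 : Λ 0 = (q:ℤ) + 1 := by linarith
  funext j
  by_cases hj0 : (j : ℕ) = 0
  · have hj : j = ⟨0, by omega⟩ := Fin.ext hj0
    rw [if_pos hj0, hj]
    simpa only [Fin.mk_zero] using hL0
  · by_cases hj1 : (j : ℕ) = 1
    · have hj : j = ⟨1, by omega⟩ := Fin.ext hj1
      rw [if_neg hj0, if_pos hj1, hj]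
      simpa only [Fin.mk_one] using hL1
    · rw [if_neg hj0, if_neg hj1]
      exact key j (by omega)
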